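/- arXiv:2509.06744 — 2 statements merged into one kernel-verified Lean document; each statement's English description precedes it below -/
import Mathlib

section
/- Let B be s.p.d. with block structure 𝔅 = {m_i}, and let D = diag_𝔅(B) be its block-diagonal part. Then for every full-rank block-diagonal matrix J, the Kaporin number factorizes as β(J B Jᵀ) = β(J D Jᵀ) · β(D^{-1/2} B D^{-1/2}). -/
open Matrix

/-- Scalar index type for a block structure with `n` blocks of sizes `m i`. -/
abbrev BIdx {n : ℕ} (m : Fin n → ℕ) := (i : Fin n) × Fin (m i)

/-- The block-diagonal part `diag_𝔅(A)` of a block-structured matrix. -/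
def bdiag {n : ℕ} {m : Fin n → ℕ} (A : Matrix (BIdx m) (BIdx m) ℝ) :
    Matrix (BIdx m) (BIdx m) ℝ :=
  fun p q => if p.1 = q.1 then A p q else 0

/-- A matrix is block-diagonal with respect to the block structure. -/
def IsBlockDiag {n : ℕ} {m : Fin n → ℕ} (J : Matrix (BIdx m) (BIdx m) ℝ) : Prop :=
  ∀ p q : BIdx m, p.1 ≠ q.1 → J p q = 0

/-- The Kaporin number of a matrix. -/
noncomputable def kaporin {N : Type*} [Fintype N] [DecidableEq N] (B : Matrix N N ℝ) : ℝ :=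
  B.trace / (Fintype.card N * B.det ^ ((Fintype.card N : ℝ)⁻¹))

section Aux

variable {n : ℕ} {m : Fin n → ℕ}

lemma bd_transpose {J : Matrix (BIdx m) (BIdx m) ℝ} (h : IsBlockDiag J) :
    IsBlockDiag Jᵀ := fun p q hpq => h q p (Ne.symm hpq)

lemma bd_mul {X Y : Matrix (BIdx m) (BIdx m) ℝ} (hX : IsBlockDiag X) (hY : IsBlockDiag Y) :
    IsBlockDiag (X * Y) := by
  intro p q hpq
  rw [Matrix.mul_apply]
  refine Finset.sum_eq_zero fun r _ => ?_
  by_cases h : p.1 = r.1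
  · rw [hY r q (h ▸ hpq), mul_zero]
  · rw [hX p r h, zero_mul]

lemma trace_mul_bdiag (M A : Matrix (BIdx m) (BIdx m) ℝ) (hM : IsBlockDiag M) :
    (M * A).trace = (M * bdiag A).trace := by
  simp only [Matrix.trace, Matrix.diag, Matrix.mul_apply]
  refine Finset.sum_congr rfl fun p _ => Finset.sum_congr rfl fun q _ => ?_
  by_cases h : p.1 = q.1
  · simp [bdiag, h.symm]
  · rw [hM p q h, zero_mul, zero_mul]

lemma trace_conj (J A : Matrix (BIdx m) (BIdx m) ℝ) (hJd : IsBlockDiag J) :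
    (J * A * Jᵀ).trace = (J * bdiag A * Jᵀ).trace := by
  rw [trace_mul_comm (J * A) Jᵀ, trace_mul_comm (J * bdiag A) Jᵀ,
    ← Matrix.mul_assoc, ← Matrix.mul_assoc]
  exact trace_mul_bdiag _ _ (bd_mul (bd_transpose hJd) hJd)

noncomputable def extVec (i : Fin n) (x : Fin (m i) → ℝ) : BIdx m → ℝ :=
  fun p => if h : p.1 = i then x (h ▸ p.2) else 0

lemma extVec_same (i : Fin n) (x : Fin (m i) → ℝ) (a : Fin (m i)) :
    extVec i x ⟨i, a⟩ = x a := by simp [extVec]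

lemma extVec_ne (i j : Fin n) (x : Fin (m i) → ℝ) (b : Fin (m j)) (h : j ≠ i) :
    extVec i x ⟨j, b⟩ = 0 := by simp [extVec, h]

lemma sum_extVec_mul (i : Fin n) (x : Fin (m i) → ℝ) (g : BIdx m → ℝ) :
    ∑ p, extVec i x p * g p = ∑ a, x a * g ⟨i, a⟩ := by
  rw [← Finset.univ_sigma_univ, Finset.sum_sigma]
  rw [Finset.sum_eq_single i]
  · exact Finset.sum_congr rfl fun a _ => by rw [extVec_same]
  · intro j _ hj
    exact Finset.sum_eq_zero fun b _ => by rw [extVec_ne _ _ _ _ hj, zero_mul]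
  · intro h; exact absurd (Finset.mem_univ i) h

/-- the diagonal blocks of `B` -/
def blk (B : Matrix (BIdx m) (BIdx m) ℝ) (i : Fin n) :
    Matrix (Fin (m i)) (Fin (m i)) ℝ := Matrix.of fun a b => B ⟨i, a⟩ ⟨i, b⟩

lemma blk_posDef (B : Matrix (BIdx m) (BIdx m) ℝ) (hD : (bdiag B).PosDef) (i : Fin n) :
    (blk B i).PosDef := by
  refine Matrix.PosDef.of_dotProduct_mulVec_pos ?_ ?_
  · have hH := hD.1
    ext a b
    have := congrFun (congrFun hH ⟨i, a⟩) ⟨i, b⟩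
    simpa [conjTranspose_apply, bdiag, blk] using this
  · intro x hx
    have hy : extVec i x ≠ 0 := by
      intro h
      apply hx
      funext a
      have := congrFun h ⟨i, a⟩
      rwa [extVec_same] at this
    have hpos := hD.dotProduct_mulVec_pos hy
    have hcalc : star (extVec i x) ⬝ᵥ (bdiag B *ᵥ extVec i x)
        = star x ⬝ᵥ (blk B i *ᵥ x) := by
      simp only [star_trivial, dotProduct, mulVec]
      rw [sum_extVec_mul]
      refine Eq.trans (Finset.sum_congr rfl fun a _ => ?_) rfl
      congr 1
      calc (∑ q, bdiag B ⟨i, a⟩ q * extVec i x q)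
          = ∑ q, extVec i x q * bdiag B ⟨i, a⟩ q := by simp_rw [mul_comm]
        _ = ∑ b, x b * bdiag B ⟨i, a⟩ ⟨i, b⟩ := sum_extVec_mul i x _
        _ = ∑ b, blk B i a b * x b := by
            refine Finset.sum_congr rfl fun b _ => ?_
            rw [mul_comm]; congr 1
            simp [bdiag, blk]
    rwa [hcalc] at hpos

lemma bdiag_eq_blockDiagonal' (B : Matrix (BIdx m) (BIdx m) ℝ) :
    bdiag B = blockDiagonal' (blk B) := by
  ext ⟨j, b⟩ ⟨k, c⟩
  by_cases h : j = k
  · subst h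
    rw [blockDiagonal'_apply_eq]
    simp [bdiag, blk]
  · rw [blockDiagonal'_apply_ne _ _ _ h]
    simp [bdiag, h]

lemma inv_bdiag_isBlockDiag (B : Matrix (BIdx m) (BIdx m) ℝ) (hD : (bdiag B).PosDef) :
    IsBlockDiag (bdiag B)⁻¹ := by
  have h1 : (bdiag B)⁻¹ = blockDiagonal' (fun i => (blk B i)⁻¹) := by
    apply inv_eq_left_inv
    rw [bdiag_eq_blockDiagonal', ← blockDiagonal'_mul]
    have : (fun k => (blk B k)⁻¹ * blk B k) = fun k => (1 : Matrix (Fin (m k)) (Fin (m k)) ℝ) := by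
      funext k
      exact nonsing_inv_mul _ (isUnit_iff_ne_zero.mpr (blk_posDef B hD k).det_pos.ne')
    rw [this]; exact blockDiagonal'_one
  rw [h1]
  rintro ⟨j, b⟩ ⟨k, c⟩ hpq
  exact blockDiagonal'_apply_ne _ _ _ hpq

end Aux

/-- For `B` s.p.d. with block structure, `D = diag_𝔅(B)` its block-diagonal part, and
any full-rank block-diagonal `J`, the Kaporin number factorizes as
`β(J B Jᵀ) = β(J D Jᵀ) · β(D^{-1/2} B D^{-1/2})`. -/
theorem kaporin_blockDiag_factorization {n : ℕ} {m : Fin n → ℕ}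
    (B : Matrix (BIdx m) (BIdx m) ℝ) (hB : B.PosDef)
    (hD : (bdiag B).PosDef)
    (J : Matrix (BIdx m) (BIdx m) ℝ) (hJ : IsUnit J) (hJd : IsBlockDiag J) :
    kaporin (J * B * Jᵀ) =
      kaporin (J * bdiag B * Jᵀ) *
        kaporin ((hD.posSemidef.1.eigenvectorUnitary.1 * diagonal (Real.sqrt ∘ hD.posSemidef.1.eigenvalues) *
            (star hD.posSemidef.1.eigenvectorUnitary : Matrix (BIdx m) (BIdx m) ℝ))⁻¹ * B *
          (hD.posSemidef.1.eigenvectorUnitary.1 * diagonal (Real.sqrt ∘ hD.posSemidef.1.eigenvalues) *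
            (star hD.posSemidef.1.eigenvectorUnitary : Matrix (BIdx m) (BIdx m) ℝ))⁻¹) := by
  rcases Nat.eq_zero_or_pos (Fintype.card (BIdx m)) with hc | hc
  · have : IsEmpty (BIdx m) := Fintype.card_eq_zero_iff.mp hc
    simp [kaporin, Matrix.trace]
  · have hN : (0 : ℝ) < (Fintype.card (BIdx m) : ℝ) := by exact_mod_cast hc
    set S := (hD.posSemidef.1.eigenvectorUnitary.1 * diagonal (Real.sqrt ∘ hD.posSemidef.1.eigenvalues) *
        (star hD.posSemidef.1.eigenvectorUnitary : Matrix (BIdx m) (BIdx m) ℝ)) with hSdef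
    have hs2 : S * S = bdiag B := by
      have hU : (star hD.posSemidef.1.eigenvectorUnitary : Matrix (BIdx m) (BIdx m) ℝ) *
          hD.posSemidef.1.eigenvectorUnitary.1 = 1 := hD.posSemidef.1.eigenvectorUnitary.2.1
      have hdd : diagonal (Real.sqrt ∘ hD.posSemidef.1.eigenvalues) *
          diagonal (Real.sqrt ∘ hD.posSemidef.1.eigenvalues) =
          diagonal (RCLike.ofReal ∘ hD.posSemidef.1.eigenvalues) := by
        rw [diagonal_mul_diagonal]; congr 1; funext k
        simp [Real.mul_self_sqrt (hD.posSemidef.eigenvalues_nonneg k)]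
      have h := hD.posSemidef.1.spectral_theorem
      rw [Unitary.conjStarAlgAut_apply] at h
      refine Eq.trans ?_ h.symm
      rw [hSdef]
      simp only [Matrix.mul_assoc]
      rw [← Matrix.mul_assoc _ (hD.posSemidef.1.eigenvectorUnitary.1), hU, Matrix.one_mul,
        ← Matrix.mul_assoc (diagonal _) (diagonal _), hdd]
    have hdD : 0 < (bdiag B).det := hD.det_pos
    have hdB : 0 < B.det := hB.det_pos
    have hdJ : J.det ≠ 0 :=
      isUnit_iff_ne_zero.mp ((Matrix.isUnit_iff_isUnit_det J).mp hJ)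
    have hdS : S.det * S.det = (bdiag B).det := by rw [← det_mul, hs2]
    have hdS0 : S.det ≠ 0 := by
      intro h; rw [h, zero_mul] at hdS; exact hdD.ne' hdS.symm
    have hSinv : S⁻¹ * S⁻¹ = (bdiag B)⁻¹ := by
      rw [← hs2]; exact (Matrix.mul_inv_rev S S).symm
    have hDinvBD : IsBlockDiag (bdiag B)⁻¹ := inv_bdiag_isBlockDiag B hD
    -- traces
    have ht1 : (J * B * Jᵀ).trace = (J * bdiag B * Jᵀ).trace := trace_conj J B hJd
    have ht3 : (S⁻¹ * B * S⁻¹).trace = (Fintype.card (BIdx m) : ℝ) := by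
      rw [trace_mul_comm, ← Matrix.mul_assoc, hSinv, trace_mul_bdiag _ _ hDinvBD,
        nonsing_inv_mul _ (isUnit_iff_ne_zero.mpr hdD.ne'), trace_one]
    -- determinants
    have hd1 : (J * B * Jᵀ).det = J.det * B.det * J.det := by
      rw [det_mul, det_mul, det_transpose]
    have hd2 : (J * bdiag B * Jᵀ).det = J.det * (bdiag B).det * J.det := by
      rw [det_mul, det_mul, det_transpose]
    have hd3 : (S⁻¹ * B * S⁻¹).det = S.det⁻¹ * B.det * S.det⁻¹ := by
      rw [det_mul, det_mul, det_nonsing_inv, Ring.inverse_eq_inv]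
    rw [kaporin, kaporin, kaporin, ht1, ht3, hd1, hd2, hd3]
    set c : ℝ := ((Fintype.card (BIdx m) : ℝ))⁻¹ with hcdef
    have hX : 0 < J.det * (bdiag B).det * J.det := by
      nlinarith [mul_self_pos.mpr hdJ]
    have hY : 0 < S.det⁻¹ * B.det * S.det⁻¹ := by
      nlinarith [mul_self_pos.mpr (inv_ne_zero hdS0)]
    have hXY : (J.det * (bdiag B).det * J.det) * (S.det⁻¹ * B.det * S.det⁻¹)
        = J.det * B.det * J.det := by
      rw [← hdS]
      field_simp
    have hXc : 0 < (J.det * (bdiag B).det * J.det) ^ c := Real.rpow_pos_of_pos hX c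
    have hYc : 0 < (S.det⁻¹ * B.det * S.det⁻¹) ^ c := Real.rpow_pos_of_pos hY c
    rw [← hXY, Real.mul_rpow hX.le hY.le]
    generalize (J * bdiag B * Jᵀ).trace = t
    generalize hA : (J.det * (bdiag B).det * J.det) ^ c = Xc at hXc
    generalize hBc : (S.det⁻¹ * B.det * S.det⁻¹) ^ c = Yc at hYc
    rw [div_mul_div_comm]
    rw [div_eq_div_iff (by positivity) (by positivity)]
    ring
end

section
/- For k ≥ 1 and any δ ∈ [−1, −cos(π/(2k+1))), the minimax problem min over p ∈ 𝒫_k with p(−1) = 1 of max_{t ∈ [δ,1]} (1+t)^{1/2}|p(t)| has the unique minimizer p̂_k(t) = W_k(−t)/(2k+1), where W_k is the Chebyshev polynomial of the fourth kind; in particular this holds for the limit case δ = −1. -/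
open Polynomial Set Real


/-- Chebyshev polynomials of the fourth kind: `W₀ = 1`, `W₁ = 2X + 1`,
`W_{n+2} = 2X W_{n+1} − W_n`. -/
noncomputable def chebyshevW : ℕ → Polynomial ℝ
  | 0 => 1
  | 1 => 2 * Polynomial.X + 1
  | (n + 2) => 2 * Polynomial.X * chebyshevW (n + 1) - chebyshevW n

lemma chebW_sin : ∀ (k : ℕ) (θ : ℝ),
    Real.sin (θ/2) * (chebyshevW k).eval (Real.cos θ) = Real.sin (((k:ℝ) + 1/2) * θ) := by
  have key : ∀ k : ℕ,
      (∀ θ : ℝ, Real.sin (θ/2) * (chebyshevW k).eval (Real.cos θ) = Real.sin (((k:ℝ) + 1/2) * θ))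
      ∧ (∀ θ : ℝ, Real.sin (θ/2) * (chebyshevW (k+1)).eval (Real.cos θ)
            = Real.sin ((((k+1:ℕ):ℝ) + 1/2) * θ)) := by
    intro k
    induction k with
    | zero =>
      constructor
      · intro θ
        show Real.sin (θ/2) * (1 : Polynomial ℝ).eval (Real.cos θ) = _
        rw [Polynomial.eval_one]
        norm_num
        ring_nf
      · intro θ
        show Real.sin (θ/2) * (2 * Polynomial.X + 1 : Polynomial ℝ).eval (Real.cos θ) = _
        simp only [Polynomial.eval_add, Polynomial.eval_mul, Polynomial.eval_ofNat,
          Polynomial.eval_X, Polynomial.eval_one]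
        have h1 : Real.sin θ = 2 * Real.sin (θ/2) * Real.cos (θ/2) := by
          rw [show θ = 2 * (θ/2) by ring, Real.sin_two_mul]; ring
        have h2 : Real.cos θ = 2 * Real.cos (θ/2)^2 - 1 := by
          have := Real.cos_two_mul (θ/2)
          rw [show 2*(θ/2) = θ by ring] at this; exact this
        have h3 : (((0+1:ℕ)):ℝ) + 1/2 = 3/2 := by norm_num
        rw [h3, show (3/2 : ℝ) * θ = θ/2 + θ by ring, Real.sin_add, h1, h2]
        ring
    | succ n ih =>
      refine ⟨ih.2, fun θ => ?_⟩
      have e : chebyshevW (n+2) = 2 * Polynomial.X * chebyshevW (n+1) - chebyshevW n := rfl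
      have i1 := ih.1 θ
      have i2 := ih.2 θ
      have hsa := Real.sin_add (((n:ℝ)+1+1/2)*θ) θ
      have hss := Real.sin_sub (((n:ℝ)+1+1/2)*θ) θ
      rw [e]
      simp only [Polynomial.eval_sub, Polynomial.eval_mul, Polynomial.eval_ofNat,
        Polynomial.eval_X]
      push_cast
      push_cast at i1 i2
      rw [show ((n:ℝ) + 1 + 1 + 1/2) * θ = ((n:ℝ)+1+1/2)*θ + θ by ring, hsa]
      rw [show ((n:ℝ) + 1/2) * θ = ((n:ℝ)+1+1/2)*θ - θ by ring, hss] at i1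
      linear_combination (2 * Real.cos θ) * i2 - i1
  exact fun k => (key k).1

lemma chebW_one : ∀ k : ℕ, (chebyshevW k).eval 1 = 2*(k:ℝ)+1 := by
  have key : ∀ k : ℕ, (chebyshevW k).eval 1 = 2*(k:ℝ)+1
      ∧ (chebyshevW (k+1)).eval 1 = 2*(((k+1:ℕ)):ℝ)+1 := by
    intro k
    induction k with
    | zero =>
      constructor
      · show (1 : Polynomial ℝ).eval 1 = _; simp
      · show (2 * Polynomial.X + 1 : Polynomial ℝ).eval 1 = _
        simp
    | succ n ih =>
      refine ⟨ih.2, ?_⟩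
      have e : chebyshevW (n+2) = 2 * Polynomial.X * chebyshevW (n+1) - chebyshevW n := rfl
      rw [e]
      simp only [Polynomial.eval_sub, Polynomial.eval_mul, Polynomial.eval_ofNat,
        Polynomial.eval_X, ih.1, ih.2]
      push_cast
      ring
  exact fun k => (key k).1

lemma chebW_degree_le : ∀ k : ℕ, (chebyshevW k).degree ≤ k := by
  have key : ∀ k : ℕ, (chebyshevW k).degree ≤ k ∧ (chebyshevW (k+1)).degree ≤ (k+1 : ℕ) := by
    intro k
    induction k with
    | zero =>
      constructor
      · exact Polynomial.degree_one_le
      · show (2 * Polynomial.X + 1 : Polynomial ℝ).degree ≤ (1:ℕ)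
        compute_degree!
    | succ n ih =>
      refine ⟨ih.2, ?_⟩
      have e : chebyshevW (n+2) = 2 * Polynomial.X * chebyshevW (n+1) - chebyshevW n := rfl
      rw [e]
      refine le_trans (Polynomial.degree_sub_le _ _) (max_le ?_ ?_)
      · refine le_trans (Polynomial.degree_mul_le _ _) ?_
        have h1 : (2 * Polynomial.X : Polynomial ℝ).degree ≤ (1:ℕ) := by compute_degree!
        calc (2 * Polynomial.X : Polynomial ℝ).degree + (chebyshevW (n+1)).degree
            ≤ ((1:ℕ) : WithBot ℕ) + ((n+1 : ℕ) : WithBot ℕ) := add_le_add h1 ih.2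
          _ = ((n+2 : ℕ) : WithBot ℕ) := by
              rw [← Nat.cast_add]; norm_num; ring
      · refine le_trans ih.1 ?_
        exact_mod_cast Nat.le_add_right n 2
  exact fun k => (key k).1

lemma alt_lemma : ∀ (n : ℕ) (s : Polynomial ℝ) (x : ℕ → ℝ),
    s.degree < (n : ℕ) →
    (∀ i j, i < j → j ≤ n → x i < x j) →
    (∀ j, j ≤ n → 0 ≤ (-1:ℝ)^j * s.eval (x j)) → s = 0 := by
  intro n
  induction n with
  | zero =>
    intro s x hdeg _ _
    by_contra hs
    exact absurd hdeg (not_lt.2 (Polynomial.zero_le_degree_iff.2 hs))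
  | succ n ih =>
    intro s x hdeg hmono hsign
    by_cases hz : ∃ j, j ≤ n + 1 ∧ s.eval (x j) = 0
    · obtain ⟨j₀, hj₀, hev⟩ := hz
      obtain ⟨u, hu⟩ := Polynomial.dvd_iff_isRoot.2 hev
      have hsu : ∀ t : ℝ, s.eval t = (t - x j₀) * u.eval t := by
        intro t; rw [hu]; simp
      have hdegu : u.degree < (n : ℕ) := by
        by_cases hu0 : u = 0
        · rw [hu0, Polynomial.degree_zero]; exact WithBot.bot_lt_coe n
        · rw [hu, Polynomial.degree_mul, Polynomial.degree_X_sub_C] at hdeg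
          rw [Polynomial.degree_eq_natDegree hu0] at hdeg ⊢
          have h1 : ((u.natDegree + 1 : ℕ) : WithBot ℕ) < ((n+1 : ℕ) : WithBot ℕ) := by
            rw [Nat.cast_add, Nat.cast_one, add_comm]; exact_mod_cast hdeg
          have h2 : u.natDegree + 1 < n + 1 := by exact_mod_cast h1
          exact_mod_cast (by omega : u.natDegree < n)
      set y : ℕ → ℝ := fun i => if i < j₀ then x i else x (i+1) with hy
      have hmono' : ∀ i j, i < j → j ≤ n → y i < y j := by
        intro i j hij hj
        by_cases hic : i < j₀ <;> by_cases hjc : j < j₀ <;>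
          simp only [hy, if_pos, if_neg, hic, hjc, if_true, if_false]
        · exact hmono i j hij (by omega)
        · exact hmono i (j+1) (by omega) (by omega)
        · omega
        · exact hmono (i+1) (j+1) (by omega) (by omega)
      have hsign' : ∀ j, j ≤ n → 0 ≤ (-1:ℝ)^j * (-u).eval (y j) := by
        intro j hj
        rw [Polynomial.eval_neg]
        by_cases hjc : j < j₀
        · have h := hsign j (by omega)
          rw [hsu] at h
          have hneg : x j - x j₀ < 0 := sub_neg.2 (hmono j j₀ hjc hj₀)
          simp only [hy, if_pos hjc]
          nlinarith [h, hneg]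
        · have h := hsign (j+1) (by omega)
          rw [hsu, pow_succ] at h
          have hpos : 0 < x (j+1) - x j₀ := sub_pos.2 (hmono j₀ (j+1) (by omega) (by omega))
          simp only [hy, if_neg hjc]
          nlinarith [h, hpos]
      have hdeg' : (-u).degree < (n : ℕ) := by rwa [Polynomial.degree_neg]
      have hu0 : u = 0 := neg_eq_zero.mp (ih (-u) y hdeg' hmono' hsign')
      rw [hu, hu0, mul_zero]
    · push_neg at hz
      have hs0 : s ≠ 0 := fun h => hz 0 (Nat.zero_le _) (by simp [h])
      have hstrict : ∀ j, j ≤ n + 1 → 0 < (-1:ℝ)^j * s.eval (x j) := by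
        intro j hj
        refine lt_of_le_of_ne (hsign j hj) (Ne.symm ?_)
        exact mul_ne_zero (pow_ne_zero j (by norm_num : (-1:ℝ) ≠ 0)) (hz j hj)
      have hroot : ∀ i : Fin (n+1), ∃ t, t ∈ Set.Ioo (x i) (x (i+1)) ∧ s.eval t = 0 := by
        rintro ⟨i, hi⟩
        simp only
        have h1 : 0 < (-1:ℝ)^i * s.eval (x i) := hstrict i (by omega)
        have h2 : 0 < (-1:ℝ)^(i+1) * s.eval (x (i+1)) := hstrict (i+1) (by omega)
        rw [pow_succ] at h2
        have hP : ((-1:ℝ)^i)^2 = 1 := by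
          rw [← pow_mul, mul_comm, pow_mul]; norm_num
        have hprod : s.eval (x i) * s.eval (x (i+1)) < 0 := by nlinarith [h1, h2, hP]
        have hxy : x i ≤ x (i+1) := (hmono i (i+1) (by omega) (by omega)).le
        have hcont : ContinuousOn (fun t => s.eval t) (Set.Icc (x i) (x (i+1))) :=
          (Polynomial.continuous s).continuousOn
        rcases lt_or_ge (s.eval (x i)) 0 with hA | hA
        · have hB : 0 < s.eval (x (i+1)) := by nlinarith [hprod, hA]
          obtain ⟨t, ht, ht0⟩ := intermediate_value_Ioo hxy hcont ⟨hA, hB⟩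
          exact ⟨t, ht, ht0⟩
        · have hA' : 0 < s.eval (x i) := by
            rcases lt_or_eq_of_le hA with h | h
            · exact h
            · exact absurd h.symm (hz i (by omega))
          have hB : s.eval (x (i+1)) < 0 := by nlinarith [hprod, hA']
          obtain ⟨t, ht, ht0⟩ := intermediate_value_Ioo' hxy hcont ⟨hB, hA'⟩
          exact ⟨t, ht, ht0⟩
      choose r hrmem hr0 using hroot
      have hrlt : ∀ a b : Fin (n+1), (a:ℕ) < (b:ℕ) → r a < r b := by
        intro a b hab
        have h1 : r a < x ((a:ℕ)+1) := (hrmem a).2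
        have h2 : x (b:ℕ) < r b := (hrmem b).1
        have h3 : x ((a:ℕ)+1) ≤ x (b:ℕ) := by
          rcases Nat.lt_or_ge ((a:ℕ)+1) (b:ℕ) with h | h
          · exact (hmono _ _ h (by omega)).le
          · have : (a:ℕ)+1 = (b:ℕ) := by omega
            rw [this]
        linarith
      have hrinj : Function.Injective r := by
        intro a b hab
        by_contra hne
        rcases Nat.lt_or_ge (a:ℕ) (b:ℕ) with h | h
        · exact absurd hab (ne_of_lt (hrlt a b h))
        · have : (b:ℕ) < (a:ℕ) := by
            rcases Nat.lt_or_ge (b:ℕ) (a:ℕ) with h' | h'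
            · exact h'
            · exact absurd (Fin.ext (by omega)) hne
          exact absurd hab.symm (ne_of_lt (hrlt b a this))
      refine Polynomial.eq_zero_of_natDegree_lt_card_of_eval_eq_zero s hrinj hr0 ?_
      rw [Fintype.card_fin]
      exact (Polynomial.natDegree_lt_iff_degree_lt hs0).2 hdeg

lemma sqrt_one_sub_cos {θ : ℝ} (h1 : 0 ≤ θ) (h2 : θ ≤ π) :
    Real.sqrt (1 - Real.cos θ) = Real.sqrt 2 * Real.sin (θ/2) := by
  rw [Real.sin_half_eq_sqrt h1 (by linarith [Real.pi_pos])]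
  rw [← Real.sqrt_mul (by norm_num : (0:ℝ) ≤ 2)]
  congr 1
  ring

lemma aux_nonneg_of_mul {w X : ℝ} (hw : 0 < w) (h : 0 ≤ w * X) : 0 ≤ X := by
  by_contra h'
  push_neg at h'
  exact absurd h (not_le.2 (mul_neg_of_pos_of_neg hw h'))

lemma chebW_abs_le (k : ℕ) {t : ℝ} (h1 : -1 ≤ t) (h2 : t ≤ 1) :
    Real.sqrt (1 + t) * |(chebyshevW k).eval (-t)| ≤ Real.sqrt 2 := by
  set θ := Real.arccos (-t) with hθ
  have hc : Real.cos θ = -t := Real.cos_arccos (by linarith) (by linarith)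
  have h0 : 0 ≤ θ := Real.arccos_nonneg _
  have hπ : θ ≤ π := Real.arccos_le_pi _
  have hs : 0 ≤ Real.sin (θ/2) :=
    Real.sin_nonneg_of_nonneg_of_le_pi (by linarith) (by linarith [Real.pi_pos])
  have key := chebW_sin k θ
  have e1 : (1 : ℝ) + t = 1 - Real.cos θ := by rw [hc]; ring
  rw [e1, sqrt_one_sub_cos h0 hπ, ← hc]
  calc Real.sqrt 2 * Real.sin (θ/2) * |(chebyshevW k).eval (Real.cos θ)|
      = Real.sqrt 2 * |Real.sin (θ/2) * (chebyshevW k).eval (Real.cos θ)| := by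
        rw [abs_mul, abs_of_nonneg hs]; ring
    _ = Real.sqrt 2 * |Real.sin (((k:ℝ)+1/2)*θ)| := by rw [key]
    _ ≤ Real.sqrt 2 * 1 := by
        refine mul_le_mul_of_nonneg_left ?_ (Real.sqrt_nonneg 2)
        exact abs_le.2 ⟨Real.neg_one_le_sin _, Real.sin_le_one _⟩
    _ = Real.sqrt 2 := mul_one _

lemma chebW_node (k j : ℕ) (hden : (0:ℝ) < 2*(k:ℝ)+1)
    (h0 : 0 ≤ (2*(j:ℝ)+1)*π/(2*(k:ℝ)+1)) (hπ : (2*(j:ℝ)+1)*π/(2*(k:ℝ)+1) ≤ π) :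
    Real.sqrt (1 + -Real.cos ((2*(j:ℝ)+1)*π/(2*(k:ℝ)+1))) *
      (chebyshevW k).eval (Real.cos ((2*(j:ℝ)+1)*π/(2*(k:ℝ)+1))) = (-1:ℝ)^j * Real.sqrt 2 := by
  set θ := (2*(j:ℝ)+1)*π/(2*(k:ℝ)+1) with hθdef
  have key := chebW_sin k θ
  have hval : ((k:ℝ)+1/2)*θ = (j:ℝ)*π + π/2 := by
    rw [hθdef]
    field_simp
  have hsin : Real.sin (((k:ℝ)+1/2)*θ) = (-1:ℝ)^j := by
    rw [hval, Real.sin_add_pi_div_two]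
    have := Real.cos_nat_mul_pi_sub 0 j
    rw [sub_zero, Real.cos_zero, mul_one] at this
    exact this
  have e1 : (1:ℝ) + -Real.cos θ = 1 - Real.cos θ := by ring
  rw [e1, sqrt_one_sub_cos h0 hπ]
  rw [hsin] at key
  linear_combination Real.sqrt 2 * key

/-- For `k ≥ 1` and any `δ ∈ [−1, −cos(π/(2k+1)))`, the minimax problem
`min_{p ∈ 𝒫ₖ, p(−1)=1} max_{t ∈ [δ,1]} (1+t)^{1/2} |p(t)|` has the unique minimizer
`p̂ₖ(t) = W_k(−t)/(2k+1)`, where `W_k` is the Chebyshev polynomial of the fourth kind;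
in particular this holds in the limit case `δ = −1`. -/
theorem chebyshevW_weighted_minimax (k : ℕ) (hk : 1 ≤ k) (δ : ℝ)
    (hδ1 : -1 ≤ δ) (hδ2 : δ < -Real.cos (π / (2 * k + 1))) :
    let phat : Polynomial ℝ :=
      Polynomial.C ((2 * (k : ℝ) + 1)⁻¹) * (chebyshevW k).comp (-Polynomial.X)
    let M : Polynomial ℝ → ℝ :=
      fun q => sSup ((fun t => Real.sqrt (1 + t) * |q.eval t|) '' Icc δ 1)
    phat.degree ≤ k ∧ phat.eval (-1) = 1 ∧
      ∀ p : Polynomial ℝ, p.degree ≤ k → p.eval (-1) = 1 →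
        M phat ≤ M p ∧ (M p = M phat → p = phat) := by
  intro phat M
  have hden : (0:ℝ) < 2*(k:ℝ)+1 := by positivity
  have hden' : (2*(k:ℝ)+1) ≠ 0 := ne_of_gt hden
  set ε : ℝ := Real.sqrt 2 / (2*(k:ℝ)+1) with hεdef
  have hεpos : 0 < ε := by
    rw [hεdef]; positivity
  have hphat_eval : ∀ t : ℝ, phat.eval t = (2*(k:ℝ)+1)⁻¹ * (chebyshevW k).eval (-t) := by
    intro t
    simp [phat, Polynomial.eval_comp]
  have hdeg_phat : phat.degree ≤ k := by
    have h2 : (-Polynomial.X : Polynomial ℝ).natDegree = 1 := by simp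
    have h3 : (chebyshevW k).natDegree ≤ k :=
      Polynomial.natDegree_le_iff_degree_le.2 (chebW_degree_le k)
    have h5 : phat.natDegree ≤ k := by
      refine le_trans (Polynomial.natDegree_C_mul_le _ _) ?_
      refine le_trans Polynomial.natDegree_comp_le ?_
      rw [h2, mul_one]
      exact h3
    calc phat.degree ≤ (phat.natDegree : WithBot ℕ) := Polynomial.degree_le_natDegree
      _ ≤ (k : WithBot ℕ) := by exact_mod_cast h5
  have hphat_neg_one : phat.eval (-1) = 1 := by
    rw [hphat_eval, neg_neg, chebW_one k, inv_mul_cancel₀ hden']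
  -- the nodes
  set θj : ℕ → ℝ := fun j => (2*(j:ℝ)+1)*π/(2*(k:ℝ)+1) with hθj
  set tj : ℕ → ℝ := fun j => -Real.cos (θj j) with htj
  have hθ0 : ∀ j : ℕ, 0 < θj j := by
    intro j
    have : (0:ℝ) < 2*(j:ℝ)+1 := by positivity
    exact div_pos (mul_pos this Real.pi_pos) hden
  have hθπ : ∀ j : ℕ, j ≤ k → θj j ≤ π := by
    intro j hj
    rw [hθj]
    rw [div_le_iff₀ hden]
    have hjk : (j:ℝ) ≤ k := by exact_mod_cast hj
    nlinarith [Real.pi_pos]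
  have hθmono : ∀ i j : ℕ, i < j → θj i < θj j := by
    intro i j hij
    have hij' : (i:ℝ) < j := by exact_mod_cast hij
    rw [hθj]
    simp only
    rw [div_lt_div_iff₀ hden hden]
    nlinarith [mul_pos Real.pi_pos hden]
  have htmono : ∀ i j : ℕ, i < j → j ≤ k → tj i < tj j := by
    intro i j hij hj
    exact neg_lt_neg (Real.cos_lt_cos_of_nonneg_of_le_pi (hθ0 i).le (hθπ j hj) (hθmono i j hij))
  have hθ0eq : θj 0 = π / (2*(k:ℝ)+1) := by
    rw [hθj]; norm_num
  have htlow : ∀ j : ℕ, j ≤ k → δ < tj j := by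
    intro j hj
    have h1 : Real.cos (θj j) ≤ Real.cos (θj 0) := by
      rcases Nat.eq_zero_or_pos j with h | h
      · rw [h]
      · exact Real.cos_le_cos_of_nonneg_of_le_pi (hθ0 0).le (hθπ j hj) (hθmono 0 j h).le
    have h2 : δ < -Real.cos (θj 0) := by rw [hθ0eq]; exact_mod_cast hδ2
    have : -Real.cos (θj 0) ≤ tj j := by rw [htj]; simp only; linarith
    linarith
  have htup : ∀ j : ℕ, tj j ≤ 1 := by
    intro j
    have := Real.neg_one_le_cos (θj j)
    rw [htj]; simp only; linarith
  have htmem : ∀ j : ℕ, j ≤ k → tj j ∈ Icc δ 1 := fun j hj => ⟨(htlow j hj).le, htup j⟩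
  have hw : ∀ j : ℕ, j ≤ k → 0 < Real.sqrt (1 + tj j) := by
    intro j hj
    have := htlow j hj
    refine Real.sqrt_pos.2 (by linarith)
  have hnode : ∀ j : ℕ, j ≤ k → Real.sqrt (1 + tj j) * phat.eval (tj j) = (-1:ℝ)^j * ε := by
    intro j hj
    have hn := chebW_node k j hden (hθ0 j).le (hθπ j hj)
    rw [hphat_eval]
    have e1 : -tj j = Real.cos (θj j) := by rw [htj]; simp
    rw [e1]
    rw [hεdef]
    have e2 : (1 : ℝ) + tj j = 1 + -Real.cos (θj j) := by rw [htj]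
    rw [e2]
    field_simp
    linear_combination hn
  -- sup facts
  have hδ1' : δ < 1 := lt_of_lt_of_le (htlow k le_rfl) (htup k)
  have hne : (Icc δ 1).Nonempty := nonempty_Icc.2 hδ1'.le
  have hcont : ∀ q : Polynomial ℝ, Continuous (fun t : ℝ => Real.sqrt (1 + t) * |q.eval t|) := by
    intro q
    exact (Real.continuous_sqrt.comp (continuous_const.add continuous_id)).mul
      (continuous_abs.comp q.continuous)
  have hbdd : ∀ q : Polynomial ℝ,
      BddAbove ((fun t => Real.sqrt (1 + t) * |q.eval t|) '' Icc δ 1) := by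
    intro q
    exact isCompact_Icc.bddAbove_image (hcont q).continuousOn
  have hmem_le : ∀ (q : Polynomial ℝ) (t : ℝ), t ∈ Icc δ 1 →
      Real.sqrt (1 + t) * |q.eval t| ≤ M q := by
    intro q t ht
    exact le_csSup (hbdd q) (mem_image_of_mem _ ht)
  -- M phat = ε
  have hupper : M phat ≤ ε := by
    refine csSup_le (hne.image _) ?_
    rintro y ⟨t, ht, rfl⟩
    simp only
    rw [hphat_eval, abs_mul, abs_of_pos (by positivity : (0:ℝ) < (2*(k:ℝ)+1)⁻¹)]
    have hb := chebW_abs_le k (le_trans hδ1 ht.1) ht.2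
    rw [hεdef]
    rw [div_eq_mul_inv, mul_comm (Real.sqrt 2)]
    calc Real.sqrt (1 + t) * ((2*(k:ℝ)+1)⁻¹ * |(chebyshevW k).eval (-t)|)
        = (2*(k:ℝ)+1)⁻¹ * (Real.sqrt (1 + t) * |(chebyshevW k).eval (-t)|) := by ring
      _ ≤ (2*(k:ℝ)+1)⁻¹ * Real.sqrt 2 :=
          mul_le_mul_of_nonneg_left hb (by positivity)
  have htk1 : tj k = 1 := by
    rw [htj]
    simp only
    have : θj k = π := by
      rw [hθj]
      simp only
      rw [mul_comm, mul_div_assoc, div_self hden', mul_one]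
    rw [this, Real.cos_pi]
    norm_num
  have hlower : ε ≤ M phat := by
    have h := hnode k le_rfl
    rw [htk1] at h
    have hv : Real.sqrt (1 + 1) * |phat.eval 1| = ε := by
      have : Real.sqrt (1 + 1) * |phat.eval 1| = |Real.sqrt (1 + 1) * phat.eval 1| := by
        rw [abs_mul, abs_of_nonneg (Real.sqrt_nonneg _)]
      rw [this, h, abs_mul, abs_pow, abs_neg, abs_one, one_pow, one_mul,
        abs_of_pos hεpos]
    refine le_csSup (hbdd phat) ?_
    exact ⟨1, ⟨hδ1'.le, le_rfl⟩, hv⟩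
  have hMphat : M phat = ε := le_antisymm hupper hlower
  -- key uniqueness lemma
  have key : ∀ p : Polynomial ℝ, p.degree ≤ k → p.eval (-1) = 1 → M p ≤ ε → p = phat := by
    intro p hdp hep hMp
    set r : Polynomial ℝ := phat - p with hr
    have hre : r.eval (-1) = 0 := by
      rw [hr, Polynomial.eval_sub, hphat_neg_one, hep, sub_self]
    obtain ⟨u, hu⟩ := Polynomial.dvd_iff_isRoot.2 hre
    have hru : ∀ t : ℝ, r.eval t = (t + 1) * u.eval t := by
      intro t; rw [hu]; simp
    have hdegr : r.degree ≤ k :=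
      le_trans (Polynomial.degree_sub_le _ _) (max_le hdeg_phat hdp)
    have hdegu : u.degree < (k:ℕ) := by
      by_cases hu0 : u = 0
      · rw [hu0, Polynomial.degree_zero]; exact WithBot.bot_lt_coe k
      · rw [hu, Polynomial.degree_mul, Polynomial.degree_X_sub_C] at hdegr
        rw [Polynomial.degree_eq_natDegree hu0] at hdegr ⊢
        have h1 : ((u.natDegree + 1 : ℕ) : WithBot ℕ) ≤ ((k : ℕ) : WithBot ℕ) := by
          rw [Nat.cast_add, Nat.cast_one, add_comm]; exact_mod_cast hdegr
        have h2 : u.natDegree + 1 ≤ k := by exact_mod_cast h1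
        exact_mod_cast (by omega : u.natDegree < k)
    have hsign : ∀ j : ℕ, j ≤ k → 0 ≤ (-1:ℝ)^j * u.eval (tj j) := by
      intro j hj
      have hmem := htmem j hj
      have h1 : Real.sqrt (1 + tj j) * |p.eval (tj j)| ≤ ε := le_trans (hmem_le p _ hmem) hMp
      have h2 := hnode j hj
      have hwj : 0 < Real.sqrt (1 + tj j) := hw j hj
      have hP : ((-1:ℝ)^j)^2 = 1 := by
        rw [← pow_mul, mul_comm, pow_mul]; norm_num
      have h5 : Real.sqrt (1 + tj j) * ((-1:ℝ)^j * phat.eval (tj j)) = ε := by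
        linear_combination ((-1:ℝ)^j) * h2 + ε * hP
      have h3 : (-1:ℝ)^j * p.eval (tj j) ≤ |p.eval (tj j)| := by
        calc (-1:ℝ)^j * p.eval (tj j) ≤ |(-1:ℝ)^j * p.eval (tj j)| := le_abs_self _
          _ = |p.eval (tj j)| := by
              rw [abs_mul, abs_pow, abs_neg, abs_one, one_pow, one_mul]
      have h6 : Real.sqrt (1 + tj j) * ((-1:ℝ)^j * p.eval (tj j)) ≤ ε :=
        le_trans (mul_le_mul_of_nonneg_left h3 hwj.le) h1
      have h7 : 0 ≤ Real.sqrt (1 + tj j) * ((-1:ℝ)^j * r.eval (tj j)) := by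
        have e : r.eval (tj j) = phat.eval (tj j) - p.eval (tj j) := by
          rw [hr, Polynomial.eval_sub]
        rw [e]
        nlinarith [h5, h6]
      have h8 : 0 ≤ (-1:ℝ)^j * r.eval (tj j) := aux_nonneg_of_mul hwj h7
      have ht1 : 0 < tj j + 1 := by have := htlow j hj; linarith
      rw [hru] at h8
      refine aux_nonneg_of_mul ht1 ?_
      linarith [h8]
    have hu0 : u = 0 := alt_lemma k u tj hdegu htmono hsign
    have hr0 : r = 0 := by rw [hu, hu0, mul_zero]
    have := sub_eq_zero.1 (hr ▸ hr0)
    exact this.symm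
  refine ⟨hdeg_phat, hphat_neg_one, fun p hdp hep => ?_⟩
  constructor
  · by_contra hlt
    push_neg at hlt
    have hple : M p ≤ ε := by rw [hMphat] at hlt; exact hlt.le
    have := key p hdp hep hple
    rw [this] at hlt
    exact lt_irrefl _ hlt
  · intro heq
    exact key p hdp hep (by rw [heq, hMphat])
end
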